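/- arXiv:0704.3902 — 2 statements merged into one kernel-verified Lean document; each statement's English description precedes it below -/
import Mathlib

section
/- For the measure Λ(dx) = α(1−α/2)x^{α−1}dx + (α/2)δ_1(dx) with 0<α<1, the mean jump satisfies E[J_n −1] = 1/(1−α) − n^{α−1}/((1−α)Γ(α)) · (1 + O(1/n)) as n→∞; in particular the error term E[J_n−1] − 1/(1−α) is of exact order n^{α−1} and not O(n^{−1}). -/
open MeasureTheory Filter Asymptotics

/-- Λ-coalescent collision rate `λ_{n,j} = C(n,j) ∫_0^1 x^{j-2}(1-x)^{n-j} Λ(dx)`. -/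
noncomputable def collRate (Λ : Measure ℝ) (b j : ℕ) : ℝ :=
  (b.choose j : ℝ) * ∫ x in Set.Icc (0:ℝ) 1, x ^ (j - 2) * (1 - x) ^ (b - j) ∂Λ

/-- Total collision rate `λ_n = Σ_{j=2}^n λ_{n,j}`. -/
noncomputable def totRate (Λ : Measure ℝ) (b : ℕ) : ℝ :=
  ∑ j ∈ Finset.Icc 2 b, collRate Λ b j

/-- The measure `Λ(dx) = α(1-α/2)x^{α-1}dx + (α/2)δ₁(dx)`, a mixture of the
beta(α,1) distribution and a point mass at 1. -/
noncomputable def mixMeasure (α : ℝ) : Measure ℝ :=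
  (volume.restrict (Set.Ioc (0:ℝ) 1)).withDensity
      (fun x => ENNReal.ofReal (α * (1 - α / 2) * x ^ (α - 1)))
    + (ENNReal.ofReal (α / 2)) • Measure.dirac 1

/-- Rising factorial `(α)_k = α(α+1)⋯(α+k-1)`, `(α)_0 = 1`. -/
noncomputable def risingFac (α : ℝ) (k : ℕ) : ℝ :=
  ∏ i ∈ Finset.range k, (α + i)

open scoped ENNReal NNReal

lemma risingFac_succ (α : ℝ) (k : ℕ) : risingFac α (k+1) = risingFac α k * (α + k) := by
  simp [risingFac, Finset.prod_range_succ]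

lemma risingFac_add (α : ℝ) (a b : ℕ) :
    risingFac α (a + b) = risingFac α a * risingFac (α + a) b := by
  induction b with
  | zero => simp [risingFac]
  | succ b ih =>
      rw [← Nat.add_assoc, risingFac_succ, ih, risingFac_succ]
      push_cast; ring

lemma risingFac_pos {α : ℝ} (h : 0 < α) (k : ℕ) : 0 < risingFac α k := by
  apply Finset.prod_pos; intro i _; positivity

lemma betaNat_ii {β : ℝ} (hβ : 0 < β) (m : ℕ) :
    IntervalIntegrable (fun x : ℝ => x ^ (β - 1) * (1 - x) ^ m) volume 0 1 :=
  (intervalIntegral.intervalIntegrable_rpow' (by linarith)).mul_continuousOn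
    (Continuous.continuousOn (by continuity))

lemma betaNat {β : ℝ} (hβ : 0 < β) (m : ℕ) :
    ∫ x in (0:ℝ)..1, x ^ (β - 1) * (1 - x) ^ m = m.factorial / risingFac β (m + 1) := by
  induction m generalizing β with
  | zero =>
      simp only [pow_zero, mul_one, Nat.factorial_zero, Nat.cast_one]
      rw [integral_rpow (Or.inl (by linarith))]
      rw [show β - 1 + 1 = β by ring, Real.one_rpow, Real.zero_rpow hβ.ne']
      simp [risingFac]
  | succ m ih =>
      have h1 : (0:ℝ) ≤ 1 := by norm_num
      have key : ∀ x ∈ Set.Ioc (0:ℝ) 1,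
          x ^ (β - 1) * (1 - x) ^ (m + 1)
          = x ^ (β - 1) * (1 - x) ^ m - x ^ (β + 1 - 1) * (1 - x) ^ m := by
        intro x hx
        have hx0 : 0 < x := hx.1
        have hxx : x ^ (β + 1 - 1) = x ^ (β - 1) * x := by
          rw [show β + 1 - 1 = (β - 1) + 1 by ring, Real.rpow_add hx0, Real.rpow_one]
        rw [hxx, pow_succ]
        ring
      have e1 : ∫ x in (0:ℝ)..1, x ^ (β - 1) * (1 - x) ^ (m + 1)
          = (∫ x in (0:ℝ)..1, x ^ (β - 1) * (1 - x) ^ m)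
            - ∫ x in (0:ℝ)..1, x ^ (β + 1 - 1) * (1 - x) ^ m := by
        rw [intervalIntegral.integral_of_le h1, intervalIntegral.integral_of_le h1,
          intervalIntegral.integral_of_le h1,
          setIntegral_congr_fun measurableSet_Ioc key]
        rw [← intervalIntegral.integral_of_le h1, ← intervalIntegral.integral_of_le h1,
          ← intervalIntegral.integral_of_le h1]
        exact intervalIntegral.integral_sub (betaNat_ii hβ m) (betaNat_ii (by linarith) m)
      rw [e1, ih hβ, ih (by linarith : (0:ℝ) < β + 1)]
      have hA : (0:ℝ) < risingFac β (m + 1) := risingFac_pos hβ _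
      have hB : (0:ℝ) < risingFac (β + 1) (m + 1) := risingFac_pos (by linarith) _
      have hrel : β * risingFac (β + 1) (m + 1) = risingFac β (m + 1) * (β + (m + 1)) := by
        have h1 := risingFac_add β 1 (m + 1)
        have h2 := risingFac_succ β (m + 1)
        rw [show 1 + (m+1) = (m+1)+1 from by ring, h2] at h1
        have : risingFac β 1 = β := by simp [risingFac]
        rw [this] at h1
        push_cast at h1 ⊢
        linarith [h1]
      rw [risingFac_succ β (m + 1)]
      have hfac : ((m+1).factorial : ℝ) = (m + 1) * m.factorial := by
        push_cast [Nat.factorial_succ]; ring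
      rw [hfac]
      rw [div_sub_div _ _ hA.ne' hB.ne', div_eq_div_iff (mul_pos hA hB).ne' (mul_pos hA (by push_cast; linarith)).ne']
      push_cast at hrel ⊢
      linear_combination ((m.factorial : ℝ) * risingFac β (m + 1)) * hrel

lemma risingFac_shift_ne_zero {α : ℝ} (h0 : 0 < α) (h1 : α < 1) (k : ℕ) :
    risingFac (α - 2) k ≠ 0 := by
  apply Finset.prod_ne_zero_iff.mpr
  intro i _
  rcases lt_or_ge i 2 with hi | hi
  · interval_cases i <;> push_cast <;> nlinarith
  · have : (2:ℝ) ≤ (i:ℝ) := by exact_mod_cast hi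
    nlinarith


lemma integral_mix {α : ℝ} (hα0 : 0 < α) (hα1 : α < 1) (k m : ℕ) :
    ∫ x in Set.Icc (0:ℝ) 1, x ^ k * (1 - x) ^ m ∂(mixMeasure α)
      = α * (1 - α / 2) * ((m.factorial : ℝ) / risingFac (α + k) (m + 1))
        + (if m = 0 then α / 2 else 0) := by
  classical
  have hc : (0:ℝ) < α * (1 - α / 2) := by nlinarith
  set f : ℝ → ℝ := fun x => x ^ k * (1 - x) ^ m with hfdef
  have hfc : Continuous f := by fun_prop
  set g : ℝ → ℝ := fun x => α * (1 - α / 2) * x ^ (α - 1) with hgdef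
  have hgm : Measurable g := by fun_prop
  have hgnn : ∀ x ∈ Set.Ioc (0:ℝ) 1, 0 ≤ g x := by
    intro x hx
    have := Real.rpow_pos_of_pos hx.1 (α - 1)
    positivity
  -- measure identities
  have hmeas_eq : ((volume.restrict (Set.Ioc (0:ℝ) 1)).withDensity
        (fun x => ENNReal.ofReal (g x))).restrict (Set.Icc 0 1)
      = (volume.restrict (Set.Ioc (0:ℝ) 1)).withDensity (fun x => ENNReal.ofReal (g x)) := by
    rw [restrict_withDensity measurableSet_Icc, Measure.restrict_restrict measurableSet_Icc,
      Set.inter_eq_self_of_subset_right Set.Ioc_subset_Icc_self]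
  have hres2 : ((ENNReal.ofReal (α/2)) • Measure.dirac (1:ℝ)).restrict (Set.Icc 0 1)
      = (ENNReal.ofReal (α/2)) • Measure.dirac 1 := by
    rw [Measure.restrict_smul, restrict_dirac]
    simp [Set.mem_Icc]
  -- density as NNReal
  have hofReal : (fun x => ENNReal.ofReal (g x)) = (fun x => ((g x).toNNReal : ℝ≥0∞)) := rfl
  have haem : AEMeasurable (fun x => (g x).toNNReal) (volume.restrict (Set.Ioc (0:ℝ) 1)) :=
    hgm.real_toNNReal.aemeasurable
  -- integrability of g * f on Ioc 0 1
  have hgf : IntegrableOn (fun x => g x * f x) (Set.Ioc (0:ℝ) 1) volume := by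
    have base : IntervalIntegrable (fun x => x ^ (α - 1) * f x) volume 0 1 :=
      (intervalIntegral.intervalIntegrable_rpow' (by linarith)).mul_continuousOn
        hfc.continuousOn
    have h2 := base.const_mul (α * (1 - α / 2))
    have hfun : (fun x:ℝ => g x * f x) = (fun x => (α*(1-α/2)) * (x ^ (α-1) * f x)) := by
      funext x; simp only [hgdef]; ring
    have h3 : IntervalIntegrable (fun x => g x * f x) volume 0 1 := by
      rw [hfun]; exact h2
    rwa [intervalIntegrable_iff_integrableOn_Ioc_of_le (by norm_num)] at h3
  -- integrability of the NNReal-smul version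
  have hsmul_eq : (fun x => g x * f x)
      =ᶠ[ae (volume.restrict (Set.Ioc (0:ℝ) 1))] (fun x => (g x).toNNReal • f x) := by
    filter_upwards [ae_restrict_mem measurableSet_Ioc] with x hx
    rw [NNReal.smul_def, Real.coe_toNNReal _ (hgnn x hx), smul_eq_mul]
  have hint1 : Integrable f
      ((volume.restrict (Set.Ioc (0:ℝ) 1)).withDensity (fun x => ENNReal.ofReal (g x))) := by
    rw [hofReal, integrable_withDensity_iff_integrable_smul₀ haem]
    exact hgf.congr hsmul_eq
  have hdint : Integrable f (Measure.dirac (1:ℝ)) := by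
    refine ⟨hfc.aestronglyMeasurable, ?_⟩
    unfold HasFiniteIntegral
    rw [lintegral_dirac]
    exact ENNReal.coe_lt_top
  -- main computation
  rw [show mixMeasure α = (volume.restrict (Set.Ioc (0:ℝ) 1)).withDensity
        (fun x => ENNReal.ofReal (g x)) + (ENNReal.ofReal (α/2)) • Measure.dirac 1 from rfl]
  rw [Measure.restrict_add, integral_add_measure (by rwa [hmeas_eq]) (by
    rw [hres2]; exact hdint.smul_measure ENNReal.ofReal_ne_top)]
  rw [hmeas_eq, hres2]
  have part1 : ∫ x, f x ∂((volume.restrict (Set.Ioc (0:ℝ) 1)).withDensity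
        (fun x => ENNReal.ofReal (g x)))
      = α * (1 - α / 2) * ((m.factorial : ℝ) / risingFac (α + k) (m + 1)) := by
    rw [hofReal, integral_withDensity_eq_integral_smul₀ haem]
    have : ∫ x in Set.Ioc (0:ℝ) 1, (g x).toNNReal • f x
        = ∫ x in Set.Ioc (0:ℝ) 1, α * (1 - α / 2) * (x ^ (α + k - 1) * (1 - x) ^ m) := by
      apply setIntegral_congr_fun measurableSet_Ioc
      intro x hx
      have hx0 : 0 < x := hx.1
      dsimp only
      rw [NNReal.smul_def, Real.coe_toNNReal _ (hgnn x hx), smul_eq_mul]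
      simp only [hgdef, hfdef]
      rw [← Real.rpow_natCast x k]
      rw [show α + (k:ℝ) - 1 = (α - 1) + (k:ℝ) by ring, Real.rpow_add hx0]
      ring
    rw [this, integral_const_mul, ← intervalIntegral.integral_of_le (by norm_num : (0:ℝ) ≤ 1)]
    rw [betaNat (by positivity) m]
  have part2 : ∫ x, f x ∂((ENNReal.ofReal (α/2)) • Measure.dirac (1:ℝ))
      = if m = 0 then α / 2 else 0 := by
    rw [integral_smul_measure, integral_dirac, ENNReal.toReal_ofReal (by positivity)]
    simp only [hfdef, one_pow, sub_self, one_mul]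
    rcases Nat.eq_zero_or_pos m with hm | hm
    · simp [hm]
    · simp [zero_pow hm.ne', hm.ne']
  rw [part1, part2]

lemma collRate_eq {α : ℝ} (hα0 : 0 < α) (hα1 : α < 1) {n j : ℕ} (h2 : 2 ≤ j) (hjn : j ≤ n) :
    collRate (mixMeasure α) n j
      = α * (1 - α / 2) * ((n.factorial : ℝ) / risingFac (α - 2) (n + 1))
          * (risingFac (α - 2) j / (j.factorial : ℝ))
        + (if j = n then α / 2 else 0) := by
  have key := integral_mix hα0 hα1 (j - 2) (n - j)
  rw [collRate, key]
  have hmeq : (n - j = 0) = (j = n) := by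
    apply propext; constructor <;> intro h <;> omega
  have hcast : ((j - 2 : ℕ) : ℝ) = (j : ℝ) - 2 := by
    push_cast [Nat.cast_sub h2]; ring
  have hsplit : risingFac (α - 2) (n + 1)
      = risingFac (α - 2) j * risingFac (α + ((j : ℕ) - 2 : ℕ)) (n - j + 1) := by
    have h := risingFac_add (α - 2) j (n - j + 1)
    rw [show j + (n - j + 1) = n + 1 by omega] at h
    rw [h, hcast]
    ring_nf
  have hrj : risingFac (α - 2) j ≠ 0 := risingFac_shift_ne_zero hα0 hα1 j
  have hrn : risingFac (α - 2) (n + 1) ≠ 0 := risingFac_shift_ne_zero hα0 hα1 (n + 1)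
  have hR : risingFac (α + ((j : ℕ) - 2 : ℕ)) (n - j + 1)
      = risingFac (α - 2) (n + 1) / risingFac (α - 2) j := by
    field_simp [hsplit]
    rw [hsplit]; ring
  have hchoose : ((n.choose j : ℕ) : ℝ) * ((n - j).factorial : ℝ)
      = (n.factorial : ℝ) / (j.factorial : ℝ) := by
    rw [eq_div_iff (by exact_mod_cast j.factorial_ne_zero)]
    push_cast [← Nat.choose_mul_factorial_mul_factorial hjn]
    ring
  simp only [hmeq]
  rw [mul_add]
  congr 1
  · have hjf : (j.factorial : ℝ) ≠ 0 := by exact_mod_cast j.factorial_ne_zero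
    have hnjf : ((n - j).factorial : ℝ) ≠ 0 := by exact_mod_cast (n - j).factorial_ne_zero
    have e : ((n.choose j : ℕ) : ℝ)
        = (n.factorial : ℝ) / ((j.factorial : ℝ) * ((n - j).factorial : ℝ)) := by
      rw [eq_div_iff (by exact mul_ne_zero hjf hnjf)]
      push_cast [← Nat.choose_mul_factorial_mul_factorial hjn]
      ring
    rw [e, hR]
    field_simp
  · by_cases h : j = n <;> simp [h, Nat.choose_self]

-- telescoping sums
lemma sum1 {α : ℝ} (hα0 : 0 < α) (hα1 : α < 1) {n : ℕ} (hn : 2 ≤ n) :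
    ∑ j ∈ Finset.Icc 2 n, risingFac (α - 2) j / (j.factorial : ℝ)
      = (risingFac (α - 2) (n + 1) / (n.factorial : ℝ) - risingFac (α - 2) 2) / (α - 2) := by
  have hα2 : α - 2 ≠ 0 := by linarith
  have key := Finset.sum_range_sub
    (fun i => risingFac (α - 2) (i + 2) / ((i + 1).factorial : ℝ)) (n - 1)
  have hterm : ∀ i : ℕ,
      risingFac (α - 2) (i + 1 + 2) / ((i + 1 + 1).factorial : ℝ)
        - risingFac (α - 2) (i + 2) / ((i + 1).factorial : ℝ)
      = (α - 2) * (risingFac (α - 2) (i + 2) / ((i + 2).factorial : ℝ)) := by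
    intro i
    have h1 : risingFac (α - 2) (i + 1 + 2) = risingFac (α - 2) (i + 2) * (α - 2 + (i + 2)) := by
      rw [show i + 1 + 2 = (i + 2) + 1 by ring, risingFac_succ]; push_cast; ring
    have h2 : ((i + 2).factorial : ℝ) = (i + 2) * ((i + 1).factorial : ℝ) := by
      rw [show i + 2 = (i + 1) + 1 by ring, Nat.factorial_succ]; push_cast; ring
    have h3 : ((i + 1).factorial : ℝ) ≠ 0 := by exact_mod_cast (i+1).factorial_ne_zero
    rw [show i + 1 + 1 = i + 2 by ring, h1, h2]
    field_simp
    ring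
  rw [show Finset.Icc 2 n = Finset.Ico 2 (n + 1) from by rw [Finset.Ico_add_one_right_eq_Icc],
    Finset.sum_Ico_eq_sum_range, show n + 1 - 2 = n - 1 by omega]
  have : ∀ i ∈ Finset.range (n - 1),
      risingFac (α - 2) (2 + i) / ((2 + i).factorial : ℝ)
      = ((fun i => risingFac (α - 2) (i + 2) / ((i + 1).factorial : ℝ)) (i + 1)
          - (fun i => risingFac (α - 2) (i + 2) / ((i + 1).factorial : ℝ)) i) / (α - 2) := by
    intro i _
    simp only
    rw [hterm i, show 2 + i = i + 2 by ring]
    field_simp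
  rw [Finset.sum_congr rfl this, ← Finset.sum_div, key]
  rw [show n - 1 + 2 = n + 1 by omega, show n - 1 + 1 = n by omega]
  norm_num

lemma sum2 {α : ℝ} (hα0 : 0 < α) (hα1 : α < 1) {n : ℕ} (hn : 2 ≤ n) :
    ∑ j ∈ Finset.Icc 2 n, risingFac (α - 2) j / (((j - 1 : ℕ)).factorial : ℝ)
      = (risingFac (α - 2) (n + 1) / (((n - 1 : ℕ)).factorial : ℝ) - risingFac (α - 2) 2)
          / (α - 1) := by
  have hα1' : α - 1 ≠ 0 := by linarith
  have key := Finset.sum_range_sub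
    (fun i => risingFac (α - 2) (i + 2) / (i.factorial : ℝ)) (n - 1)
  have hterm : ∀ i : ℕ,
      risingFac (α - 2) (i + 1 + 2) / ((i + 1).factorial : ℝ)
        - risingFac (α - 2) (i + 2) / (i.factorial : ℝ)
      = (α - 1) * (risingFac (α - 2) (i + 2) / ((i + 1).factorial : ℝ)) := by
    intro i
    have h1 : risingFac (α - 2) (i + 1 + 2) = risingFac (α - 2) (i + 2) * (α - 2 + (i + 2)) := by
      rw [show i + 1 + 2 = (i + 2) + 1 by ring, risingFac_succ]; push_cast; ring
    have h2 : ((i + 1).factorial : ℝ) = (i + 1) * (i.factorial : ℝ) := by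
      rw [Nat.factorial_succ]; push_cast; ring
    have h3 : (i.factorial : ℝ) ≠ 0 := by exact_mod_cast i.factorial_ne_zero
    rw [h1, h2]
    field_simp
    ring
  rw [show Finset.Icc 2 n = Finset.Ico 2 (n + 1) from by rw [Finset.Ico_add_one_right_eq_Icc],
    Finset.sum_Ico_eq_sum_range, show n + 1 - 2 = n - 1 by omega]
  have : ∀ i ∈ Finset.range (n - 1),
      risingFac (α - 2) (2 + i) / (((2 + i - 1 : ℕ)).factorial : ℝ)
      = ((fun i => risingFac (α - 2) (i + 2) / (i.factorial : ℝ)) (i + 1)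
          - (fun i => risingFac (α - 2) (i + 2) / (i.factorial : ℝ)) i) / (α - 1) := by
    intro i _
    simp only
    rw [hterm i, show 2 + i = i + 2 by ring, show i + 2 - 1 = i + 1 by omega]
    field_simp
  rw [Finset.sum_congr rfl this, ← Finset.sum_div, key]
  rw [show n - 1 + 2 = n + 1 by omega]
  norm_num

lemma risingFac_two {α : ℝ} : risingFac (α - 2) 2 = (α - 2) * (α - 1) := by
  rw [risingFac, Finset.prod_range_succ, Finset.prod_range_one]
  push_cast
  ring

lemma risingFac_shift {α : ℝ} {n : ℕ} (hn : 2 ≤ n) :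
    risingFac (α - 2) (n + 1) = (α - 2) * (α - 1) * risingFac α (n - 1) := by
  have h := risingFac_add (α - 2) 2 (n - 1)
  rw [show 2 + (n - 1) = n + 1 by omega] at h
  rw [h, show α - 2 + ((2:ℕ):ℝ) = α from by push_cast; ring, risingFac_two]

lemma totRate_eq {α : ℝ} (hα0 : 0 < α) (hα1 : α < 1) {n : ℕ} (hn : 2 ≤ n) :
    totRate (mixMeasure α) n = α / 2 * (n.factorial : ℝ) / risingFac α (n - 1) := by
  have hP : (0:ℝ) < risingFac α (n - 1) := risingFac_pos hα0 _
  have hnf : ((n.factorial : ℕ) : ℝ) ≠ 0 := by exact_mod_cast n.factorial_ne_zero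
  have h2 : α - 2 ≠ 0 := by linarith
  have h1 : α - 1 ≠ 0 := by linarith
  rw [totRate]
  rw [Finset.sum_congr rfl (fun j hj =>
    collRate_eq hα0 hα1 (Finset.mem_Icc.mp hj).1 (Finset.mem_Icc.mp hj).2)]
  rw [Finset.sum_add_distrib, ← Finset.mul_sum, sum1 hα0 hα1 hn,
    Finset.sum_ite_eq' (Finset.Icc 2 n) n (fun _ => α / 2),
    if_pos (Finset.mem_Icc.mpr ⟨hn, le_refl n⟩)]
  rw [risingFac_shift hn, risingFac_two]
  field_simp
  ring

lemma wsum_eq {α : ℝ} (hα0 : 0 < α) (hα1 : α < 1) {n : ℕ} (hn : 2 ≤ n) :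
    ∑ j ∈ Finset.Icc 2 n, ((j:ℝ) - 1) * collRate (mixMeasure α) n j
      = α / 2 * (n.factorial : ℝ) / risingFac α (n - 1)
        * (1 / (1 - α) - risingFac α (n - 1) / ((1 - α) * (((n - 1 : ℕ)).factorial : ℝ))) := by
  have hP : (0:ℝ) < risingFac α (n - 1) := risingFac_pos hα0 _
  have hnf : ((n.factorial : ℕ) : ℝ) ≠ 0 := by exact_mod_cast n.factorial_ne_zero
  have hnf1 : (((n-1).factorial : ℕ) : ℝ) ≠ 0 := by exact_mod_cast (n-1).factorial_ne_zero
  have h2 : α - 2 ≠ 0 := by linarith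
  have h1 : α - 1 ≠ 0 := by linarith
  have h1' : (1:ℝ) - α ≠ 0 := by linarith
  have hterm : ∀ j ∈ Finset.Icc 2 n, ((j:ℝ) - 1) * collRate (mixMeasure α) n j
      = α * (1 - α / 2) * ((n.factorial : ℝ) / risingFac (α - 2) (n + 1))
          * (risingFac (α - 2) j / (((j - 1 : ℕ)).factorial : ℝ)
             - risingFac (α - 2) j / (j.factorial : ℝ))
        + (if j = n then ((j:ℝ) - 1) * (α / 2) else 0) := by
    intro j hj
    obtain ⟨hj2, hjn⟩ := Finset.mem_Icc.mp hj
    rw [collRate_eq hα0 hα1 hj2 hjn, mul_add, mul_ite, mul_zero]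
    congr 1
    have hjfac : ((j:ℝ)) * (((j - 1 : ℕ)).factorial : ℝ) = (j.factorial : ℝ) := by
      exact_mod_cast congrArg (Nat.cast : ℕ → ℝ) (Nat.mul_factorial_pred (by omega : j ≠ 0))
    have hjf : (j.factorial : ℝ) ≠ 0 := by exact_mod_cast j.factorial_ne_zero
    have hjf1 : (((j-1).factorial : ℕ) : ℝ) ≠ 0 := by exact_mod_cast (j-1).factorial_ne_zero
    have key : ((j:ℝ) - 1) * (risingFac (α - 2) j / (j.factorial : ℝ))
        = risingFac (α - 2) j / (((j - 1 : ℕ)).factorial : ℝ)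
          - risingFac (α - 2) j / (j.factorial : ℝ) := by
      have hj0 : (j:ℝ) ≠ 0 := Nat.cast_ne_zero.mpr (by omega)
      rw [← hjfac, div_sub_div _ _ hjf1 (mul_ne_zero hj0 hjf1), mul_div_assoc',
        div_eq_div_iff (mul_ne_zero hj0 hjf1) (mul_ne_zero hjf1 (mul_ne_zero hj0 hjf1))]
      ring
    rw [← key]
    ring
  rw [Finset.sum_congr rfl hterm, Finset.sum_add_distrib, ← Finset.mul_sum,
    Finset.sum_sub_distrib, sum1 hα0 hα1 hn, sum2 hα0 hα1 hn,
    Finset.sum_ite_eq' (Finset.Icc 2 n) n (fun j => ((j:ℝ) - 1) * (α / 2)),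
    if_pos (Finset.mem_Icc.mpr ⟨hn, le_refl n⟩)]
  have hnfac : (n.factorial : ℝ) = (n : ℝ) * (((n - 1 : ℕ)).factorial : ℝ) := by
    exact_mod_cast (congrArg (Nat.cast : ℕ → ℝ) (Nat.mul_factorial_pred (by omega : n ≠ 0))).symm
  rw [risingFac_shift hn, risingFac_two, hnfac]
  have hn' : ((n:ℝ)) ≠ 0 := by positivity
  field_simp
  ring

lemma totRate_pos {α : ℝ} (hα0 : 0 < α) (hα1 : α < 1) {n : ℕ} (hn : 2 ≤ n) :
    0 < totRate (mixMeasure α) n := by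
  rw [totRate_eq hα0 hα1 hn]
  have hP : (0:ℝ) < risingFac α (n - 1) := risingFac_pos hα0 _
  have : (0:ℝ) < (n.factorial : ℝ) := by exact_mod_cast n.factorial_pos
  positivity

lemma S_eq {α : ℝ} (hα0 : 0 < α) (hα1 : α < 1) {n : ℕ} (hn : 2 ≤ n) :
    ∑ j ∈ Finset.Icc 2 n,
        ((j:ℝ) - 1) * (collRate (mixMeasure α) n j / totRate (mixMeasure α) n)
      = 1 / (1 - α) - risingFac α (n - 1) / ((1 - α) * (((n - 1 : ℕ)).factorial : ℝ)) := by
  have hDpos := totRate_pos hα0 hα1 hn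
  have step : ∀ j ∈ Finset.Icc 2 n,
      ((j:ℝ) - 1) * (collRate (mixMeasure α) n j / totRate (mixMeasure α) n)
      = (((j:ℝ) - 1) * collRate (mixMeasure α) n j) / totRate (mixMeasure α) n :=
    fun j _ => (mul_div_assoc _ _ _).symm
  rw [totRate_eq hα0 hα1 hn] at hDpos
  rw [Finset.sum_congr rfl step, ← Finset.sum_div, wsum_eq hα0 hα1 hn, totRate_eq hα0 hα1 hn,
    mul_div_assoc, mul_comm, div_mul_cancel₀ _ hDpos.ne']

lemma Gamma_risingFac {α : ℝ} (hα0 : 0 < α) (k : ℕ) :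
    Real.Gamma (α + k) = risingFac α k * Real.Gamma α := by
  induction k with
  | zero => simp [risingFac]
  | succ k ih =>
      have he : α + ((k:ℕ) + 1 : ℕ) = (α + k) + 1 := by push_cast; ring
      have hpos : α + (k:ℝ) ≠ 0 := by positivity
      rw [he, Real.Gamma_add_one hpos, ih, risingFac_succ]
      ring

lemma gautschi_upper {α x : ℝ} (hα0 : 0 < α) (hα1 : α < 1) (hx : 0 < x) :
    Real.Gamma (x + α) ≤ Real.Gamma x * x ^ α := by
  have h := Real.Gamma_mul_add_mul_le_rpow_Gamma_mul_rpow_Gamma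
    (s := x) (t := x + 1) (a := 1 - α) (b := α) hx (by linarith) (by linarith) hα0 (by ring)
  rw [show (1 - α) * x + α * (x + 1) = x + α by ring, Real.Gamma_add_one hx.ne'] at h
  have hΓ : (0:ℝ) < Real.Gamma x := Real.Gamma_pos_of_pos hx
  calc Real.Gamma (x + α) ≤ Real.Gamma x ^ (1 - α) * (x * Real.Gamma x) ^ α := h
    _ = Real.Gamma x * x ^ α := by
        rw [Real.mul_rpow hx.le hΓ.le,
          show Real.Gamma x ^ (1 - α) * (x ^ α * Real.Gamma x ^ α)
            = Real.Gamma x ^ (1 - α) * Real.Gamma x ^ α * x ^ α from by ring,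
          ← Real.rpow_add hΓ, show 1 - α + α = 1 by ring, Real.rpow_one]

lemma gautschi_lower {α x : ℝ} (hα0 : 0 < α) (hα1 : α < 1) (hx : 0 < x) :
    Real.Gamma (x + 1) ≤ Real.Gamma (x + α) * (x + α) ^ (1 - α) := by
  have hxα : (0:ℝ) < x + α := by linarith
  have h := Real.Gamma_mul_add_mul_le_rpow_Gamma_mul_rpow_Gamma
    (s := x + α) (t := x + α + 1) (a := α) (b := 1 - α) hxα (by linarith) hα0 (by linarith)
    (by ring)
  rw [show α * (x + α) + (1 - α) * (x + α + 1) = x + 1 by ring,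
    Real.Gamma_add_one hxα.ne'] at h
  have hΓ : (0:ℝ) < Real.Gamma (x + α) := Real.Gamma_pos_of_pos hxα
  calc Real.Gamma (x + 1) ≤ Real.Gamma (x + α) ^ α * ((x + α) * Real.Gamma (x + α)) ^ (1 - α) := h
    _ = Real.Gamma (x + α) * (x + α) ^ (1 - α) := by
        rw [Real.mul_rpow hxα.le hΓ.le,
          show Real.Gamma (x + α) ^ α * ((x + α) ^ (1 - α) * Real.Gamma (x + α) ^ (1 - α))
            = Real.Gamma (x + α) ^ α * Real.Gamma (x + α) ^ (1 - α) * (x + α) ^ (1 - α)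
            from by ring,
          ← Real.rpow_add hΓ, show α + (1 - α) = 1 by ring, Real.rpow_one]

lemma ratio_bounds {α : ℝ} (hα0 : 0 < α) (hα1 : α < 1) {n : ℕ} (hn : 2 ≤ n) :
    ((((n - 1 : ℕ)):ℝ) + α) ^ (α - 1)
        ≤ Real.Gamma α * (risingFac α (n - 1) / (((n - 1 : ℕ)).factorial : ℝ))
      ∧ Real.Gamma α * (risingFac α (n - 1) / (((n - 1 : ℕ)).factorial : ℝ))
        ≤ (((n - 1 : ℕ)):ℝ) ^ (α - 1) := by
  set x : ℝ := (((n - 1 : ℕ)):ℝ) with hxdef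
  have hx : (0:ℝ) < x := by
    have : 1 ≤ n - 1 := by omega
    simp only [hxdef]; exact_mod_cast Nat.lt_of_lt_of_le Nat.zero_lt_one this
  have hxα : (0:ℝ) < x + α := by linarith
  have hΓx1 : Real.Gamma (x + 1) = (((n - 1 : ℕ)).factorial : ℝ) :=
    Real.Gamma_nat_eq_factorial (n - 1)
  have hΓxα : Real.Gamma (x + α) = risingFac α (n - 1) * Real.Gamma α := by
    rw [show x + α = α + ((n - 1 : ℕ) : ℝ) by ring]
    exact Gamma_risingFac hα0 (n - 1)
  have hΓx1pos : (0:ℝ) < Real.Gamma (x + 1) := Real.Gamma_pos_of_pos (by linarith)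
  have hfac_pos : (0:ℝ) < (((n - 1 : ℕ)).factorial : ℝ) := by exact_mod_cast (n-1).factorial_pos
  have hΓα : (0:ℝ) < Real.Gamma α := Real.Gamma_pos_of_pos hα0
  have hE : Real.Gamma α * (risingFac α (n - 1) / (((n - 1 : ℕ)).factorial : ℝ))
      = Real.Gamma (x + α) / Real.Gamma (x + 1) := by
    rw [hΓxα, hΓx1]; ring
  have hΓx1' : Real.Gamma (x + 1) = x * Real.Gamma x := Real.Gamma_add_one hx.ne'
  have hΓxpos : (0:ℝ) < Real.Gamma x := Real.Gamma_pos_of_pos hx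
  constructor
  · -- lower bound
    rw [hE]
    have h := gautschi_lower hα0 hα1 hx
    have hpow : (0:ℝ) < (x + α) ^ (1 - α) := Real.rpow_pos_of_pos hxα _
    have hpow2 : (0:ℝ) < (x + α) ^ (α - 1) := Real.rpow_pos_of_pos hxα _
    rw [le_div_iff₀ hΓx1pos]
    have hinv : (x + α) ^ (α - 1) * (x + α) ^ (1 - α) = 1 := by
      rw [← Real.rpow_add hxα]; norm_num
    calc (x + α) ^ (α - 1) * Real.Gamma (x + 1)
        ≤ (x + α) ^ (α - 1) * (Real.Gamma (x + α) * (x + α) ^ (1 - α)) :=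
          mul_le_mul_of_nonneg_left h hpow2.le
      _ = Real.Gamma (x + α) := by
          rw [show (x + α) ^ (α - 1) * (Real.Gamma (x + α) * (x + α) ^ (1 - α))
              = Real.Gamma (x + α) * ((x + α) ^ (α - 1) * (x + α) ^ (1 - α)) from by ring,
            hinv, mul_one]
  · rw [hE]
    have h := gautschi_upper hα0 hα1 hx
    rw [div_le_iff₀ hΓx1pos, hΓx1']
    calc Real.Gamma (x + α) ≤ Real.Gamma x * x ^ α := h
      _ = x ^ (α - 1) * (x * Real.Gamma x) := by
          rw [show α = (α - 1) + 1 by ring, Real.rpow_add hx, Real.rpow_one]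
          ring

/-- For the mixture measure, `E[J_n-1] = 1/(1-α) - n^{α-1}/((1-α)Γ(α))·(1+O(1/n))`;
in particular the error `E[J_n-1] - 1/(1-α)` is of exact order `n^{α-1}`, not
`O(n^{-1})`. -/
theorem stmt16 (α : ℝ) (hα0 : 0 < α) (hα1 : α < 1) :
    (∃ g : ℕ → ℝ, (g =O[atTop] fun n : ℕ => (n : ℝ)⁻¹) ∧
      ∀ᶠ n : ℕ in atTop,
        ∑ j ∈ Finset.Icc 2 n,
            ((j : ℝ) - 1) * (collRate (mixMeasure α) n j / totRate (mixMeasure α) n)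
          = 1 / (1 - α)
            - (n : ℝ) ^ (α - 1) / ((1 - α) * Real.Gamma α) * (1 + g n)) ∧
    ¬ ((fun n : ℕ =>
          (∑ j ∈ Finset.Icc 2 n,
            ((j : ℝ) - 1) * (collRate (mixMeasure α) n j / totRate (mixMeasure α) n))
            - 1 / (1 - α))
        =O[atTop] fun n : ℕ => (n : ℝ)⁻¹) := by
  have hΓα : (0:ℝ) < Real.Gamma α := Real.Gamma_pos_of_pos hα0
  have h1α : (0:ℝ) < 1 - α := by linarith
  set E : ℕ → ℝ := fun n => risingFac α (n - 1) / (((n - 1 : ℕ)).factorial : ℝ) with hEdef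
  set g : ℕ → ℝ := fun n => Real.Gamma α * E n / (n:ℝ) ^ (α - 1) - 1 with hgdef
  have hfacts : ∀ n : ℕ, 2 ≤ n → 0 ≤ g n ∧ g n ≤ 2 * (n:ℝ)⁻¹ ∧
      (n:ℝ) ^ (α - 1) ≤ Real.Gamma α * E n := by
    intro n hn
    obtain ⟨hlow, hup⟩ := ratio_bounds hα0 hα1 hn
    set x : ℝ := (((n - 1 : ℕ)):ℝ) with hxdef
    have hx1 : (1:ℝ) ≤ x := by
      have h : 1 ≤ n - 1 := by omega
      rw [hxdef]
      exact_mod_cast h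
    have hx0 : (0:ℝ) < x := by linarith
    have hxn : x + 1 = (n:ℝ) := by
      rw [hxdef]
      have : ((n - 1 : ℕ) : ℝ) = (n:ℝ) - 1 := by
        have : (1:ℕ) ≤ n := by omega
        push_cast [Nat.cast_sub this]; ring
      rw [this]; ring
    have hnpos : (0:ℝ) < (n:ℝ) := by linarith
    have hnpow : (0:ℝ) < (n:ℝ) ^ (α - 1) := Real.rpow_pos_of_pos hnpos _
    have hxα0 : (0:ℝ) < x + α := by linarith
    have hxα_le : x + α ≤ (n:ℝ) := by linarith
    have hlow2 : (n:ℝ) ^ (α - 1) ≤ (x + α) ^ (α - 1) :=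
      Real.rpow_le_rpow_of_nonpos hxα0 hxα_le (by linarith)
    have hEbound : (n:ℝ) ^ (α - 1) ≤ Real.Gamma α * E n := le_trans hlow2 hlow
    have hg0 : 0 ≤ g n := by
      rw [hgdef]; simp only
      rw [sub_nonneg, le_div_iff₀ hnpow, one_mul]
      exact hEbound
    have hup2 : Real.Gamma α * E n / (n:ℝ) ^ (α - 1) ≤ (x / (n:ℝ)) ^ (α - 1) := by
      rw [Real.div_rpow hx0.le hnpos.le]
      gcongr
    have hratio : (x / (n:ℝ)) ^ (α - 1) ≤ (n:ℝ) / x := by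
      have hd1 : x / (n:ℝ) ≤ 1 := by rw [div_le_one hnpos]; linarith
      have h2 : (x / (n:ℝ)) ^ (α - 1) ≤ (x / (n:ℝ)) ^ (-1:ℝ) :=
        Real.rpow_le_rpow_of_exponent_ge (by positivity) hd1 (by linarith)
      rw [Real.rpow_neg_one, inv_div] at h2
      exact h2
    have hgle : g n ≤ 2 * (n:ℝ)⁻¹ := by
      have hA : g n ≤ (n:ℝ) / x - 1 := by
        rw [hgdef]; simp only
        linarith [le_trans hup2 hratio]
      have hB : (n:ℝ) / x - 1 = 1 / x := by
        field_simp; linarith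
      have hC : (1:ℝ) / x ≤ 2 * (n:ℝ)⁻¹ := by
        rw [show 2 * (n:ℝ)⁻¹ = 2 / (n:ℝ) by ring, div_le_div_iff₀ hx0 hnpos]
        nlinarith
      linarith [hA, hB, hC]
    exact ⟨hg0, hgle, hEbound⟩
  refine ⟨⟨g, ?_, ?_⟩, ?_⟩
  · rw [isBigO_iff]
    refine ⟨2, ?_⟩
    filter_upwards [eventually_ge_atTop 2] with n hn
    obtain ⟨hg0, hgle, _⟩ := hfacts n hn
    have hnpos : (0:ℝ) < (n:ℝ) := by
      have : (0:ℕ) < n := by omega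
      exact_mod_cast this
    rw [Real.norm_eq_abs, Real.norm_eq_abs, abs_of_nonneg hg0,
      abs_of_nonneg (by positivity : (0:ℝ) ≤ (n:ℝ)⁻¹)]
    exact hgle
  · filter_upwards [eventually_ge_atTop 2] with n hn
    rw [S_eq hα0 hα1 hn]
    have hnpos : (0:ℝ) < (n:ℝ) := by
      have : (0:ℕ) < n := by omega
      exact_mod_cast this
    have hnpow : (0:ℝ) < (n:ℝ) ^ (α - 1) := Real.rpow_pos_of_pos hnpos _
    have hfac : (0:ℝ) < (((n - 1 : ℕ)).factorial : ℝ) := by exact_mod_cast (n-1).factorial_pos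
    have h1pg : 1 + g n = Real.Gamma α * E n / (n:ℝ) ^ (α - 1) := by
      simp only [hgdef]; ring
    rw [h1pg, hEdef]
    simp only
    field_simp
  · intro hO
    rw [isBigO_iff] at hO
    obtain ⟨c, hc⟩ := hO
    have hten : Tendsto (fun n : ℕ => (n:ℝ) ^ α) atTop atTop :=
      (tendsto_rpow_atTop hα0).comp tendsto_natCast_atTop_atTop
    have hev : ∀ᶠ n : ℕ in atTop, c * (1 - α) * Real.Gamma α < (n:ℝ) ^ α :=
      hten.eventually_gt_atTop _
    obtain ⟨n, hcn, hgt, hn⟩ := (hc.and (hev.and (eventually_ge_atTop 2))).exists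
    obtain ⟨_, _, hEbound⟩ := hfacts n hn
    have hnpos : (0:ℝ) < (n:ℝ) := by
      have : (0:ℕ) < n := by omega
      exact_mod_cast this
    have hfac : (0:ℝ) < (((n - 1 : ℕ)).factorial : ℝ) := by exact_mod_cast (n-1).factorial_pos
    have hval : (∑ j ∈ Finset.Icc 2 n,
          ((j : ℝ) - 1) * (collRate (mixMeasure α) n j / totRate (mixMeasure α) n))
          - 1 / (1 - α) = -(E n / (1 - α)) := by
      have hfacne : (((n - 1 : ℕ)).factorial : ℝ) ≠ 0 := hfac.ne'
      rw [S_eq hα0 hα1 hn, hEdef]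
      simp only
      field_simp
      ring
    rw [hval] at hcn
    have hEpos : (0:ℝ) < E n := by
      rw [hEdef]; simp only
      exact div_pos (risingFac_pos hα0 _) hfac
    rw [norm_neg, Real.norm_eq_abs, Real.norm_eq_abs,
      abs_of_nonneg (by positivity : (0:ℝ) ≤ E n / (1 - α)),
      abs_of_nonneg (by positivity : (0:ℝ) ≤ (n:ℝ)⁻¹)] at hcn
    -- hcn : E n / (1 - α) ≤ c * n⁻¹
    have h4 : (n:ℝ) ^ (α - 1) ≤ Real.Gamma α * ((1 - α) * (c * (n:ℝ)⁻¹)) := by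
      calc (n:ℝ) ^ (α - 1) ≤ Real.Gamma α * E n := hEbound
        _ ≤ Real.Gamma α * ((1 - α) * (c * (n:ℝ)⁻¹)) := by
            apply mul_le_mul_of_nonneg_left _ hΓα.le
            rw [div_le_iff₀ h1α] at hcn
            linarith [hcn]
    have h5 := mul_le_mul_of_nonneg_right h4 hnpos.le
    rw [show Real.Gamma α * ((1 - α) * (c * (n:ℝ)⁻¹)) * (n:ℝ)
        = Real.Gamma α * (1 - α) * c * ((n:ℝ)⁻¹ * (n:ℝ)) by ring,
      inv_mul_cancel₀ hnpos.ne', mul_one] at h5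
    have h6 : (n:ℝ) ^ (α - 1) * (n:ℝ) = (n:ℝ) ^ α := by
      rw [← Real.rpow_add_one hnpos.ne' (α - 1)]
      norm_num
    rw [h6] at h5
    nlinarith [hgt, h5]
end

section
/- For a finite measure Λ on [0,1] and n ≥ 2, the characteristic function φ_n(u) = E[e^{iu(J_n−1)}] of the decrement J_n−1 (where P(J_n=j)=λ_{n,j}/λ_n) satisfies φ_n(u) = 1 − ((1−e^{−iu})/λ_n) Σ_{j=1}^{n−1} ∫_0^1 ((1−x)^j − (1−(1−e^{iu})x)^j)/x Λ(dx). -/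
open MeasureTheory

lemma sum_Icc_two_eq (n : ℕ) (hn : 2 ≤ n) (f : ℕ → ℂ) :
    ∑ j ∈ Finset.Icc 2 n, f j = (∑ j ∈ Finset.range (n+1), f j) - f 0 - f 1 := by
  have h : Finset.range (n+1) = insert 0 (insert 1 (Finset.Icc 2 n)) := by
    ext j; simp [Finset.mem_Icc, Finset.mem_range]; omega
  have h0 : (0:ℕ) ∉ insert 1 (Finset.Icc 2 n) := by simp
  have h1 : (1:ℕ) ∉ Finset.Icc 2 n := by simp
  rw [h, Finset.sum_insert h0, Finset.sum_insert h1]; ring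

lemma sum_Icc_one_eq (n : ℕ) (hn : 2 ≤ n) (f : ℕ → ℂ) :
    ∑ k ∈ Finset.Icc 1 (n-1), f k = (∑ k ∈ Finset.range n, f k) - f 0 := by
  have h : Finset.range n = insert 0 (Finset.Icc 1 (n-1)) := by
    ext j; simp [Finset.mem_Icc, Finset.mem_range]; omega
  have h0 : (0:ℕ) ∉ Finset.Icc 1 (n-1) := by simp
  rw [h, Finset.sum_insert h0]; ring

lemma if_eq_sum (z : ℂ) (k : ℕ) (x : ℝ) :
    (if x = 0 then -(k : ℂ) * z
     else ((1 - (x:ℂ)) ^ k - (1 - (1 - z) * (x:ℂ)) ^ k) / (x:ℂ))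
    = -z * ∑ m ∈ Finset.range k, (1 - (x:ℂ))^m * (1 - (1-z)*(x:ℂ))^(k-1-m) := by
  split_ifs with h
  · subst h
    simp [Finset.sum_const, Finset.card_range]
    ring
  · have hx : (x:ℂ) ≠ 0 := Complex.ofReal_ne_zero.mpr h
    have hg := geom_sum₂_mul (1 - (x:ℂ)) (1 - (1-z)*(x:ℂ)) k
    rw [div_eq_iff hx]
    linear_combination -hg

lemma aux_pointwise (z : ℂ) (hz : z ≠ 0) (n : ℕ) (hn : 2 ≤ n) (x : ℝ) :
    ∑ j ∈ Finset.Icc 2 n,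
        (n.choose j : ℂ) * (x:ℂ)^(j-2) * (1-(x:ℂ))^(n-j) * (z^(j-1) - 1)
      = (z - 1) * ∑ k ∈ Finset.Icc 1 (n-1), ∑ m ∈ Finset.range k,
          (1-(x:ℂ))^m * (1-(1-z)*(x:ℂ))^(k-1-m) := by
  by_cases hz1 : z = 1
  · subst hz1; simp
  by_cases hx : x = 0
  · subst hx
    have hnat : ∑ k ∈ Finset.Icc 1 (n-1), k = n.choose 2 := by
      have h : Finset.range n = insert 0 (Finset.Icc 1 (n-1)) := by
        ext j; simp [Finset.mem_Icc, Finset.mem_range]; omega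
      have h2 := Finset.sum_range_id_mul_two n
      rw [h, Finset.sum_insert (by simp)] at h2
      have hc : n.choose 2 = n * (n-1) / 2 := Nat.choose_two_right n
      omega
    have hL : ∑ j ∈ Finset.Icc 2 n,
        (n.choose j : ℂ) * ((0:ℝ):ℂ)^(j-2) * (1-((0:ℝ):ℂ))^(n-j) * (z^(j-1) - 1)
        = (n.choose 2 : ℂ) * (z - 1) := by
      rw [Finset.sum_eq_single 2]
      · norm_num
      · intro j hj hj2
        simp only [Finset.mem_Icc] at hj
        have : j - 2 ≠ 0 := by omega
        simp [zero_pow this]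
      · intro h; simp at h; omega
    rw [hL]
    have : ∀ k, ∑ m ∈ Finset.range k, (1-((0:ℝ):ℂ))^m * (1-(1-z)*((0:ℝ):ℂ))^(k-1-m) = (k:ℂ) := by
      intro k; simp
    rw [Finset.sum_congr rfl (fun k _ => this k)]
    rw [show ∑ k ∈ Finset.Icc 1 (n-1), (k:ℂ) = ((∑ k ∈ Finset.Icc 1 (n-1), k : ℕ) : ℂ) by
      push_cast; rfl]
    rw [hnat]; ring
  have hxC : (x:ℂ) ≠ 0 := Complex.ofReal_ne_zero.mpr hx
  set a : ℂ := 1 - (x:ℂ) with ha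
  set b : ℂ := 1 - (1-z)*(x:ℂ) with hb
  have hBsum : ∑ j ∈ Finset.range (n+1), (z*(x:ℂ))^j * a^(n-j) * (n.choose j : ℂ) = b^n := by
    rw [← add_pow]; congr 1; rw [ha, hb]; ring
  have hAsum : ∑ j ∈ Finset.range (n+1), ((x:ℂ))^j * a^(n-j) * (n.choose j : ℂ) = 1 := by
    rw [← add_pow]; rw [ha, show ((x:ℂ) + (1 - (x:ℂ))) = 1 by ring, one_pow]
  have hterm : ∀ j ∈ Finset.Icc 2 n,
      (x:ℂ)^2 * z * ((n.choose j : ℂ) * (x:ℂ)^(j-2) * a^(n-j) * (z^(j-1) - 1))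
      = (z*(x:ℂ))^j * a^(n-j) * (n.choose j : ℂ) - z * (((x:ℂ))^j * a^(n-j) * (n.choose j : ℂ)) := by
    intro j hj
    simp only [Finset.mem_Icc] at hj
    have hxj : (x:ℂ)^2 * (x:ℂ)^(j-2) = (x:ℂ)^j := by
      rw [← pow_add]; congr 1; omega
    have hzj : z * z^(j-1) = z^j := by
      rw [← pow_succ']; congr 1; omega
    rw [mul_pow, ← hxj, ← hzj]; ring
  have E1 : (x:ℂ)^2 * z * (∑ j ∈ Finset.Icc 2 n,
        (n.choose j : ℂ) * (x:ℂ)^(j-2) * a^(n-j) * (z^(j-1) - 1))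
      = b^n + (z-1)*a^n - z := by
    rw [Finset.mul_sum, Finset.sum_congr rfl hterm, Finset.sum_sub_distrib,
      sum_Icc_two_eq n hn, ← Finset.mul_sum,
      sum_Icc_two_eq n hn (fun j => ((x:ℂ))^j * a^(n-j) * (n.choose j : ℂ)),
      hBsum, hAsum]
    simp only [pow_zero, pow_one, Nat.choose_zero_right, Nat.choose_one_right, Nat.sub_zero,
      Nat.cast_one]
    ring
  have hinner : ∀ k ∈ Finset.Icc 1 (n-1),
      z * (x:ℂ) * (∑ m ∈ Finset.range k, a^m * b^(k-1-m)) = b^k - a^k := by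
    intro k _
    have hg := geom_sum₂_mul a b k
    have hab : a - b = -(z*(x:ℂ)) := by rw [ha, hb]; ring
    rw [hab] at hg
    linear_combination -hg
  have E2 : z * (x:ℂ) * (∑ k ∈ Finset.Icc 1 (n-1), ∑ m ∈ Finset.range k, a^m * b^(k-1-m))
      = (∑ k ∈ Finset.range n, b^k) - (∑ k ∈ Finset.range n, a^k) := by
    rw [Finset.mul_sum, Finset.sum_congr rfl hinner, Finset.sum_sub_distrib,
      sum_Icc_one_eq n hn, sum_Icc_one_eq n hn (fun k => a^k)]
    simp only [pow_zero]; ring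
  have E3 := geom_sum_mul b n
  have E4 := geom_sum_mul a n
  have hb1 : b - 1 = (z-1)*(x:ℂ) := by rw [hb]; ring
  have ha1 : a - 1 = -(x:ℂ) := by rw [ha]; ring
  rw [hb1] at E3; rw [ha1] at E4
  have hne : (x:ℂ)^2 * z ≠ 0 := mul_ne_zero (pow_ne_zero _ hxC) hz
  apply mul_left_cancel₀ hne
  rw [E1]
  linear_combination -(z-1)*(x:ℂ)*E2 - E3 - (z-1)*E4

/-- The characteristic function `φ_n(u) = E[e^{iu(J_n-1)}]` of the decrement
satisfies `φ_n(u) = 1 - ((1-e^{-iu})/λ_n) Σ_{j=1}^{n-1} ∫_0^1 ((1-x)^j -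
(1-(1-e^{iu})x)^j)/x Λ(dx)`, the integrand being extended by continuity at `x = 0`
(with value `-j e^{iu}`). -/
theorem stmt17 (Λ : Measure ℝ) [IsFiniteMeasure Λ] (n : ℕ) (hn : 2 ≤ n)
    (hpos : 0 < totRate Λ n) (u : ℝ) :
    ∑ j ∈ Finset.Icc 2 n,
        ((collRate Λ n j / totRate Λ n : ℝ) : ℂ)
          * Complex.exp (Complex.I * u * ((j : ℂ) - 1))
      = 1 - ((1 - Complex.exp (-(Complex.I * u))) / (totRate Λ n : ℂ))
          * ∑ j ∈ Finset.Icc 1 (n - 1),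
              ∫ x in Set.Icc (0:ℝ) 1,
                (if x = 0 then -(j : ℂ) * Complex.exp (Complex.I * u)
                 else ((1 - (x:ℂ)) ^ j
                   - (1 - (1 - Complex.exp (Complex.I * u)) * (x:ℂ)) ^ j) / (x:ℂ)) ∂Λ := by
  set z := Complex.exp (Complex.I * u) with hzdef
  have hz0 : z ≠ 0 := Complex.exp_ne_zero _
  have hl0 : (totRate Λ n : ℂ) ≠ 0 := Complex.ofReal_ne_zero.mpr (ne_of_gt hpos)
  -- rewrite the exponentials as powers of z
  have hexp : ∀ j ∈ Finset.Icc 2 n,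
      Complex.exp (Complex.I * u * ((j:ℂ) - 1)) = z^(j-1) := by
    intro j hj
    simp only [Finset.mem_Icc] at hj
    have h1 : Complex.I * u * ((j:ℂ) - 1) = ((j-1 : ℕ) : ℂ) * (Complex.I * u) := by
      have : ((j - 1 : ℕ) : ℂ) = (j : ℂ) - 1 := by
        push_cast [Nat.cast_sub (by omega : 1 ≤ j)]; ring
      rw [this]; ring
    rw [h1, Complex.exp_nat_mul]
  have hzinv : Complex.exp (-(Complex.I * u)) = z⁻¹ := by
    rw [hzdef, ← Complex.exp_neg]
  -- integrability
  have hintL : ∀ j : ℕ, IntegrableOn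
      (fun x : ℝ => (n.choose j : ℂ) * (x:ℂ)^(j-2) * (1-(x:ℂ))^(n-j) * (z^(j-1) - 1))
      (Set.Icc (0:ℝ) 1) Λ := by
    intro j
    apply ContinuousOn.integrableOn_compact isCompact_Icc
    apply Continuous.continuousOn; fun_prop
  have hintR : ∀ k : ℕ, IntegrableOn
      (fun x : ℝ => -z * ∑ m ∈ Finset.range k, (1 - (x:ℂ))^m * (1 - (1-z)*(x:ℂ))^(k-1-m))
      (Set.Icc (0:ℝ) 1) Λ := by
    intro k
    apply ContinuousOn.integrableOn_compact isCompact_Icc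
    apply Continuous.continuousOn; fun_prop
  -- collRate term as a complex integral
  have hcoll : ∀ j ∈ Finset.Icc 2 n, ((collRate Λ n j : ℝ) : ℂ) * (z^(j-1) - 1)
      = ∫ x in Set.Icc (0:ℝ) 1,
          (n.choose j : ℂ) * (x:ℂ)^(j-2) * (1-(x:ℂ))^(n-j) * (z^(j-1) - 1) ∂Λ := by
    intro j _
    have hof : ((∫ x in Set.Icc (0:ℝ) 1, x^(j-2)*(1-x)^(n-j) ∂Λ : ℝ) : ℂ)
        = ∫ x in Set.Icc (0:ℝ) 1, ((x:ℂ)^(j-2)*(1-(x:ℂ))^(n-j)) ∂Λ := by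
      calc ((∫ x in Set.Icc (0:ℝ) 1, x^(j-2)*(1-x)^(n-j) ∂Λ : ℝ) : ℂ)
          = ∫ x in Set.Icc (0:ℝ) 1, ((x^(j-2)*(1-x)^(n-j) : ℝ) : ℂ) ∂Λ := integral_ofReal.symm
        _ = ∫ x in Set.Icc (0:ℝ) 1, ((x:ℂ)^(j-2)*(1-(x:ℂ))^(n-j)) ∂Λ := by
            apply integral_congr_ae; filter_upwards with x; push_cast; ring
    rw [collRate, Complex.ofReal_mul, Complex.ofReal_natCast, hof]
    rw [show (fun x : ℝ => (n.choose j : ℂ) * (x:ℂ)^(j-2) * (1-(x:ℂ))^(n-j) * (z^(j-1) - 1))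
        = fun x : ℝ => ((n.choose j : ℂ) * (z^(j-1) - 1)) * ((x:ℂ)^(j-2)*(1-(x:ℂ))^(n-j)) by
      funext x; ring]
    rw [integral_const_mul]
    ring
  -- the LHS numerator sum as one integral
  have hLsum : ∑ j ∈ Finset.Icc 2 n, ((collRate Λ n j : ℝ) : ℂ) * (z^(j-1) - 1)
      = ∫ x in Set.Icc (0:ℝ) 1, ∑ j ∈ Finset.Icc 2 n,
          (n.choose j : ℂ) * (x:ℂ)^(j-2) * (1-(x:ℂ))^(n-j) * (z^(j-1) - 1) ∂Λ := by
    rw [Finset.sum_congr rfl hcoll, ← integral_finset_sum _ (fun j _ => hintL j)]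
  -- the RHS sum of integrals as one integral
  have hT : ∑ j ∈ Finset.Icc 1 (n - 1),
        (∫ x in Set.Icc (0:ℝ) 1,
          (if x = 0 then -(j : ℂ) * z
           else ((1 - (x:ℂ)) ^ j - (1 - (1 - z) * (x:ℂ)) ^ j) / (x:ℂ)) ∂Λ)
      = ∫ x in Set.Icc (0:ℝ) 1, ∑ k ∈ Finset.Icc 1 (n-1),
          (-z * ∑ m ∈ Finset.range k, (1 - (x:ℂ))^m * (1 - (1-z)*(x:ℂ))^(k-1-m)) ∂Λ := by
    rw [Finset.sum_congr rfl (fun k _ => integral_congr_ae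
      (Filter.Eventually.of_forall (fun x => if_eq_sum z k x)))]
    exact (integral_finset_sum _ (fun k _ => hintR k)).symm
  -- main identity
  have hmain : ∑ j ∈ Finset.Icc 2 n, ((collRate Λ n j : ℝ) : ℂ) * (z^(j-1) - 1)
      = -(1 - z⁻¹) * ∑ j ∈ Finset.Icc 1 (n - 1),
          (∫ x in Set.Icc (0:ℝ) 1,
            (if x = 0 then -(j : ℂ) * z
             else ((1 - (x:ℂ)) ^ j - (1 - (1 - z) * (x:ℂ)) ^ j) / (x:ℂ)) ∂Λ) := by
    rw [hLsum, hT, ← integral_const_mul]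
    apply integral_congr_ae
    filter_upwards with x
    rw [aux_pointwise z hz0 n hn x]
    have hinv : z⁻¹ * z = 1 := inv_mul_cancel₀ hz0
    set S := ∑ k ∈ Finset.Icc 1 (n-1), ∑ m ∈ Finset.range k,
        (1-(x:ℂ))^m * (1-(1-z)*(x:ℂ))^(k-1-m) with hS
    rw [show ∑ k ∈ Finset.Icc 1 (n-1),
        (-z * ∑ m ∈ Finset.range k, (1 - (x:ℂ))^m * (1 - (1-z)*(x:ℂ))^(k-1-m)) = -z * S by
      rw [hS, Finset.mul_sum]]
    linear_combination S * hinv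
  -- collRate sums to totRate
  have hsum : ((totRate Λ n : ℝ) : ℂ) = ∑ j ∈ Finset.Icc 2 n, ((collRate Λ n j : ℝ) : ℂ) := by
    rw [totRate]; push_cast; rfl
  have hsplit : ∑ j ∈ Finset.Icc 2 n, ((collRate Λ n j : ℝ) : ℂ) * (z^(j-1) - 1)
      = (∑ j ∈ Finset.Icc 2 n, ((collRate Λ n j : ℝ) : ℂ) * z^(j-1))
        - ∑ j ∈ Finset.Icc 2 n, ((collRate Λ n j : ℝ) : ℂ) := by
    rw [← Finset.sum_sub_distrib]
    exact Finset.sum_congr rfl fun _ _ => by ring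
  -- rewrite goal LHS
  have h1 : ∑ j ∈ Finset.Icc 2 n,
        ((collRate Λ n j / totRate Λ n : ℝ) : ℂ) * Complex.exp (Complex.I * u * ((j:ℂ) - 1))
      = (∑ j ∈ Finset.Icc 2 n, ((collRate Λ n j : ℝ) : ℂ) * z^(j-1)) / (totRate Λ n : ℂ) := by
    rw [Finset.sum_div]
    apply Finset.sum_congr rfl
    intro j hj
    rw [hexp j hj, Complex.ofReal_div]
    ring
  rw [h1, hzinv]
  rw [div_eq_iff hl0]
  have : (∑ j ∈ Finset.Icc 2 n, ((collRate Λ n j : ℝ) : ℂ) * z^(j-1))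
      = ((totRate Λ n : ℝ) : ℂ) - (1 - z⁻¹) * ∑ j ∈ Finset.Icc 1 (n - 1),
          (∫ x in Set.Icc (0:ℝ) 1,
            (if x = 0 then -(j : ℂ) * z
             else ((1 - (x:ℂ)) ^ j - (1 - (1 - z) * (x:ℂ)) ^ j) / (x:ℂ)) ∂Λ) := by
    linear_combination hmain - hsplit - hsum
  rw [this]
  field_simp
  ring
end
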